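/- (Existence and non-uniqueness of background transonic shock solutions on the sphere.) Let θ₀ ∈ (0, π/2), θ₁ ∈ (π/2, π), and u₀ ∈ (c_*, u_max) satisfy F(u₀)·sin θ₀ < F(c_*)·sin θ₁. Then for every shock position θ_b ∈ [θ₀, θ₁] there exist continuous functions u⁻ : [θ₀, θ_b] → (c_*, u_max) and u⁺ : [θ_b, θ₁] → (0, c_*) such that u⁻(θ₀) = u₀, F(u⁻(θ))·sin θ = F(u₀)·sin θ₀ for all θ ∈ [θ₀, θ_b], and F(u⁺(θ))·sin θ = F(u₀)·sin θ₀ for all θ ∈ [θ_b, θ₁]. In particular the Rankine–Hugoniot condition ρ(u⁻(θ_b))·u⁻(θ_b) = ρ(u⁺(θ_b))·u⁺(θ_b) and the entropy condition p(u⁻(θ_b)) < p(u⁺(θ_b)) hold at the shock. -/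

import Mathlib

open Real Set Filter Topology

/-- Maximal speed `u_max = √(2c₀²/(γ−1))`. -/
noncomputable def uMax (γ c₀ : ℝ) : ℝ := Real.sqrt (2 * c₀ ^ 2 / (γ - 1))

/-- Critical (sonic) speed `c_* = √(2c₀²/(γ+1))`. -/
noncomputable def cStar (γ c₀ : ℝ) : ℝ := Real.sqrt (2 * c₀ ^ 2 / (γ + 1))

/-- Local sonic speed `c(u) = √(c₀² − ((γ−1)/2)u²)`. -/
noncomputable def sonic (γ c₀ u : ℝ) : ℝ := Real.sqrt (c₀ ^ 2 - (γ - 1) / 2 * u ^ 2)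

/-- Density `ρ(u) = ((c₀² − ((γ−1)/2)u²)/γ)^{1/(γ−1)}`. -/
noncomputable def dens (γ c₀ u : ℝ) : ℝ :=
  ((c₀ ^ 2 - (γ - 1) / 2 * u ^ 2) / γ) ^ ((1 : ℝ) / (γ - 1))

/-- Mass flux `F(u) = ρ(u)·u`. -/
noncomputable def flux (γ c₀ u : ℝ) : ℝ := dens γ c₀ u * u

/-- Pressure `p(u) = ρ(u)^γ`. -/
noncomputable def pres (γ c₀ u : ℝ) : ℝ := dens γ c₀ u ^ γ


section Aux
variable {γ c₀ : ℝ}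

lemma uMax_sq (hγ : 1 < γ) (hc₀ : 0 < c₀) : uMax γ c₀ ^ 2 = 2 * c₀ ^ 2 / (γ - 1) := by
  have h1 : (0:ℝ) < γ - 1 := by linarith
  rw [uMax, sq_sqrt]; positivity

lemma cStar_sq (hγ : 1 < γ) (hc₀ : 0 < c₀) : cStar γ c₀ ^ 2 = 2 * c₀ ^ 2 / (γ + 1) := by
  have h1 : (0:ℝ) < γ + 1 := by linarith
  rw [cStar, sq_sqrt]; positivity

lemma cStar_pos (hγ : 1 < γ) (hc₀ : 0 < c₀) : 0 < cStar γ c₀ := by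
  have h1 : (0:ℝ) < γ + 1 := by linarith
  rw [cStar]; positivity

lemma uMax_pos (hγ : 1 < γ) (hc₀ : 0 < c₀) : 0 < uMax γ c₀ := by
  have h1 : (0:ℝ) < γ - 1 := by linarith
  rw [uMax]; positivity

lemma cStar_lt_uMax (hγ : 1 < γ) (hc₀ : 0 < c₀) : cStar γ c₀ < uMax γ c₀ := by
  rw [cStar, uMax]
  apply Real.sqrt_lt_sqrt (by positivity)
  apply div_lt_div_of_pos_left (by positivity) (by linarith) (by linarith)

lemma A_pos (hγ : 1 < γ) (hc₀ : 0 < c₀) {u : ℝ} (hu : u < uMax γ c₀) (hu0 : 0 ≤ u) :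
    0 < c₀ ^ 2 - (γ - 1) / 2 * u ^ 2 := by
  have h2 : u ^ 2 < uMax γ c₀ ^ 2 := by
    have := uMax_pos (γ := γ) (c₀ := c₀) hγ hc₀
    nlinarith
  rw [uMax_sq hγ hc₀] at h2
  have hγ1 : (0:ℝ) < γ - 1 := by linarith
  have := (lt_div_iff₀ hγ1).mp h2
  nlinarith

lemma A_uMax (hγ : 1 < γ) (hc₀ : 0 < c₀) : c₀ ^ 2 - (γ - 1) / 2 * uMax γ c₀ ^ 2 = 0 := by
  rw [uMax_sq hγ hc₀]
  have h1 : γ - 1 ≠ 0 := by linarith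
  field_simp
  ring

lemma dens_pos (hγ : 1 < γ) (hc₀ : 0 < c₀) {u : ℝ} (hu : u < uMax γ c₀) (hu0 : 0 ≤ u) : 0 < dens γ c₀ u := by
  have h := A_pos hγ hc₀ hu hu0
  have hγ0 : (0:ℝ) < γ := by linarith
  rw [dens]
  exact Real.rpow_pos_of_pos (by positivity) _

lemma flux_cont (hγ : 1 < γ) (hc₀ : 0 < c₀) : Continuous (flux γ c₀) := by
  have h1 : Continuous (fun u : ℝ => (c₀ ^ 2 - (γ - 1) / 2 * u ^ 2) / γ) := by continuity
  have h2 : (0:ℝ) ≤ 1 / (γ - 1) := by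
    have : (0:ℝ) < γ - 1 := by linarith
    positivity
  exact (h1.rpow_const (fun x => Or.inr h2)).mul continuous_id

lemma flux_zero (hγ : 1 < γ) (hc₀ : 0 < c₀) : flux γ c₀ 0 = 0 := by simp [flux]

lemma flux_uMax (hγ : 1 < γ) (hc₀ : 0 < c₀) : flux γ c₀ (uMax γ c₀) = 0 := by
  rw [flux, dens, A_uMax hγ hc₀]
  rw [zero_div, Real.zero_rpow (one_div_ne_zero (by linarith)), zero_mul]

lemma flux_pos (hγ : 1 < γ) (hc₀ : 0 < c₀) {u : ℝ} (hu : u < uMax γ c₀) (hu0 : 0 < u) : 0 < flux γ c₀ u :=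
  mul_pos (dens_pos hγ hc₀ hu hu0.le) hu0

lemma flux_hasDerivAt (hγ : 1 < γ) (hc₀ : 0 < c₀) {u : ℝ} (hu : u < uMax γ c₀) (hu0 : 0 ≤ u) :
    HasDerivAt (flux γ c₀)
      (((c₀ ^ 2 - (γ - 1) / 2 * u ^ 2) / γ) ^ ((1:ℝ) / (γ - 1) - 1) *
        ((c₀ ^ 2 - (γ + 1) / 2 * u ^ 2) / γ)) u := by
  have hγ0 : (0:ℝ) < γ := by linarith
  have hγ1 : (0:ℝ) < γ - 1 := by linarith
  have hA := A_pos hγ hc₀ hu hu0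
  set A : ℝ → ℝ := fun u => (c₀ ^ 2 - (γ - 1) / 2 * u ^ 2) / γ with hAdef
  have hApos : 0 < A u := by positivity
  have hA' : HasDerivAt A (-((γ - 1) * u) / γ) u := by
    have h := ((hasDerivAt_pow 2 u).const_mul ((γ - 1) / 2)).const_sub (c₀ ^ 2)
    have h2 := h.div_const γ
    exact h2.congr_deriv (by ring)
  have hR := hA'.rpow_const (p := (1:ℝ)/(γ-1)) (Or.inl (ne_of_gt hApos))
  have hF := hR.mul (hasDerivAt_id u)
  have : flux γ c₀ = fun y => A y ^ ((1:ℝ)/(γ-1)) * y := by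
    funext y; rw [flux, dens]
  rw [this]
  have hsplit : A u ^ ((1:ℝ)/(γ-1)) = A u ^ ((1:ℝ)/(γ-1) - 1) * A u := by
    rw [← Real.rpow_add_one (ne_of_gt hApos)]
    norm_num
  refine hF.congr_deriv ?_
  symm
  rw [id_eq, hsplit]
  have h1 : -((γ - 1) * u) / γ * ((1:ℝ)/(γ-1)) = -u / γ := by
    field_simp
  have h2 : A u = (c₀ ^ 2 - (γ - 1) / 2 * u ^ 2) / γ := rfl
  calc A u ^ ((1:ℝ)/(γ-1) - 1) * ((c₀ ^ 2 - (γ + 1) / 2 * u ^ 2) / γ)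
      = A u ^ ((1:ℝ)/(γ-1) - 1) * (-u/γ * u + (c₀ ^ 2 - (γ - 1) / 2 * u ^ 2) / γ) := by
        congr 1; field_simp; ring
    _ = -((γ - 1) * u) / γ * ((1:ℝ)/(γ-1)) * A u ^ ((1:ℝ)/(γ-1) - 1) * u
        + A u ^ ((1:ℝ)/(γ-1) - 1) * A u * 1 := by
        rw [h1, h2]; ring

lemma flux_strictMonoOn (hγ : 1 < γ) (hc₀ : 0 < c₀) : StrictMonoOn (flux γ c₀) (Icc 0 (cStar γ c₀)) := by
  apply strictMonoOn_of_deriv_pos (convex_Icc _ _) (flux_cont hγ hc₀).continuousOn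
  intro x hx
  rw [interior_Icc] at hx
  have hx1 : x < uMax γ c₀ := hx.2.trans (cStar_lt_uMax hγ hc₀)
  rw [(flux_hasDerivAt hγ hc₀ hx1 hx.1.le).deriv]
  have hA := A_pos hγ hc₀ hx1 hx.1.le
  have hγ0 : (0:ℝ) < γ := by linarith
  have hB : 0 < c₀ ^ 2 - (γ + 1) / 2 * x ^ 2 := by
    have h2 : x ^ 2 < cStar γ c₀ ^ 2 := by
      have := cStar_pos (γ := γ) (c₀ := c₀) hγ hc₀
      nlinarith [hx.2, hx.1]
    rw [cStar_sq hγ hc₀] at h2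
    have := (lt_div_iff₀ (by linarith : (0:ℝ) < γ + 1)).mp h2
    nlinarith
  have := Real.rpow_pos_of_pos (show (0:ℝ) < (c₀ ^ 2 - (γ - 1) / 2 * x ^ 2) / γ by positivity) ((1:ℝ)/(γ-1) - 1)
  positivity

lemma flux_strictAntiOn (hγ : 1 < γ) (hc₀ : 0 < c₀) : StrictAntiOn (flux γ c₀) (Icc (cStar γ c₀) (uMax γ c₀)) := by
  have hγ0 : (0:ℝ) < γ := by linarith
  have hanti : StrictAntiOn (flux γ c₀) (Ico (cStar γ c₀) (uMax γ c₀)) := by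
    apply strictAntiOn_of_deriv_neg (convex_Ico _ _) ((flux_cont hγ hc₀).continuousOn)
    intro x hx
    rw [interior_Ico] at hx
    have hx0 : 0 ≤ x := ((cStar_pos hγ hc₀).trans hx.1).le
    rw [(flux_hasDerivAt hγ hc₀ hx.2 hx0).deriv]
    have hA := A_pos hγ hc₀ hx.2 hx0
    have hB : c₀ ^ 2 - (γ + 1) / 2 * x ^ 2 < 0 := by
      have h2 : cStar γ c₀ ^ 2 < x ^ 2 := by
        have := cStar_pos (γ := γ) (c₀ := c₀) hγ hc₀
        nlinarith [hx.1]
      rw [cStar_sq hγ hc₀] at h2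
      have := (div_lt_iff₀ (by linarith : (0:ℝ) < γ + 1)).mp h2
      nlinarith
    have hP := Real.rpow_pos_of_pos (show (0:ℝ) < (c₀ ^ 2 - (γ - 1) / 2 * x ^ 2) / γ by positivity) ((1:ℝ)/(γ-1) - 1)
    have hBneg : (c₀ ^ 2 - (γ + 1) / 2 * x ^ 2) / γ < 0 := div_neg_of_neg_of_pos hB hγ0
    exact mul_neg_of_pos_of_neg hP hBneg
  intro x hx y hy hxy
  rcases lt_or_eq_of_le hy.2 with h | h
  · exact hanti ⟨hx.1, hxy.trans h⟩ ⟨hy.1, h⟩ hxy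
  · rw [h, flux_uMax hγ hc₀]
    exact flux_pos hγ hc₀ (h ▸ hxy) ((cStar_pos hγ hc₀).trans_le hx.1)

end Aux

lemma exists_cont_inv {s : Set ℝ} (hs : IsCompact s) {f : ℝ → ℝ}
    (hf : ContinuousOn f s) (hinj : Set.InjOn f s) :
    ∃ g : ℝ → ℝ, ContinuousOn g (f '' s) ∧ ∀ x ∈ s, g (f x) = x := by
  classical
  haveI : CompactSpace s := isCompact_iff_compactSpace.mp hs
  set F : s → ℝ := s.restrict f with hFdef
  have hFc : Continuous F := continuousOn_iff_continuous_restrict.mp hf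
  have hFi : Function.Injective F := fun a b hab => Subtype.ext (hinj a.2 b.2 hab)
  have hemb := (hFc.isClosedEmbedding hFi).isEmbedding
  let h := hemb.toHomeomorph
  refine ⟨fun y => if hy : y ∈ Set.range F then ((h.symm ⟨y, hy⟩ : s) : ℝ) else 0, ?_, ?_⟩
  · rw [← Set.range_restrict]
    rw [continuousOn_iff_continuous_restrict]
    have heq : (Set.range F).restrict (fun y => if hy : y ∈ Set.range F then ((h.symm ⟨y, hy⟩ : s) : ℝ) else 0)
        = fun y : Set.range F => ((h.symm y : s) : ℝ) := by
      funext y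
      exact dif_pos y.2
    change Continuous ((Set.range F).restrict (fun y => if hy : y ∈ Set.range F then ((h.symm ⟨y, hy⟩ : s) : ℝ) else 0))
    rw [heq]
    exact continuous_subtype_val.comp h.symm.continuous
  · intro x hx
    have hmem : f x ∈ Set.range F := ⟨⟨x, hx⟩, rfl⟩
    simp only [dif_pos hmem]
    have : h.symm ⟨f x, hmem⟩ = ⟨x, hx⟩ := by
      apply h.injective
      rw [Homeomorph.apply_symm_apply]
      rfl
    rw [this]

/-- existence and non-uniqueness of background transonic shock solutions on
the sphere: for every shock position `θ_b ∈ [θ₀, θ₁]` there is a background transonic shock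
solution with shock at `θ_b`, satisfying the Rankine–Hugoniot and entropy conditions. -/
theorem background_solution_exists_any_shock_position (γ c₀ θ₀ θ₁ u₀ : ℝ)
    (hγ : 1 < γ) (hc₀ : 0 < c₀)
    (hθ₀ : θ₀ ∈ Set.Ioo 0 (π / 2)) (hθ₁ : θ₁ ∈ Set.Ioo (π / 2) π)
    (hu₀ : u₀ ∈ Set.Ioo (cStar γ c₀) (uMax γ c₀))
    (hflux : flux γ c₀ u₀ * Real.sin θ₀ < flux γ c₀ (cStar γ c₀) * Real.sin θ₁) :
    ∀ θb ∈ Set.Icc θ₀ θ₁,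
      ∃ um up : ℝ → ℝ,
        ContinuousOn um (Set.Icc θ₀ θb) ∧
        ContinuousOn up (Set.Icc θb θ₁) ∧
        (∀ θ ∈ Set.Icc θ₀ θb, um θ ∈ Set.Ioo (cStar γ c₀) (uMax γ c₀)) ∧
        (∀ θ ∈ Set.Icc θb θ₁, up θ ∈ Set.Ioo 0 (cStar γ c₀)) ∧
        um θ₀ = u₀ ∧
        (∀ θ ∈ Set.Icc θ₀ θb,
          flux γ c₀ (um θ) * Real.sin θ = flux γ c₀ u₀ * Real.sin θ₀) ∧
        (∀ θ ∈ Set.Icc θb θ₁,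
          flux γ c₀ (up θ) * Real.sin θ = flux γ c₀ u₀ * Real.sin θ₀) ∧
        dens γ c₀ (um θb) * um θb = dens γ c₀ (up θb) * up θb ∧
        pres γ c₀ (um θb) < pres γ c₀ (up θb) := by
  intro θb hθb
  set cs := cStar γ c₀ with hcs_def
  set uM := uMax γ c₀ with huM_def
  have hcs : 0 < cs := cStar_pos hγ hc₀
  have hcsuM : cs < uM := cStar_lt_uMax hγ hc₀
  have hu₀1 : cs < u₀ := hu₀.1
  have hu₀2 : u₀ < uM := hu₀.2
  set m := flux γ c₀ u₀ * Real.sin θ₀ with hm_def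
  have hsθ : ∀ θ ∈ Icc θ₀ θ₁, 0 < Real.sin θ := by
    intro θ hθ
    exact Real.sin_pos_of_pos_of_lt_pi (lt_of_lt_of_le hθ₀.1 hθ.1)
      (lt_of_le_of_lt hθ.2 hθ₁.2)
  have hsθ₀ : 0 < Real.sin θ₀ := hsθ θ₀ ⟨le_rfl, hθb.1.trans hθb.2⟩
  have hfcs : 0 < flux γ c₀ cs := flux_pos hγ hc₀ hcsuM hcs
  have hfu₀ : 0 < flux γ c₀ u₀ := flux_pos hγ hc₀ hu₀2 (hcs.trans hu₀1)
  have hfu₀lt : flux γ c₀ u₀ < flux γ c₀ cs :=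
    flux_strictAntiOn hγ hc₀ ⟨le_rfl, hcsuM.le⟩ ⟨hu₀1.le, hu₀2.le⟩ hu₀1
  have hm : 0 < m := mul_pos hfu₀ hsθ₀
  have key : ∀ θ ∈ Icc θ₀ θ₁, m < flux γ c₀ cs * Real.sin θ := by
    intro θ hθ
    have hθpos : 0 < θ := lt_of_lt_of_le hθ₀.1 hθ.1
    by_cases hhalf : θ ≤ π / 2
    · have hmono : Real.sin θ₀ ≤ Real.sin θ :=
        Real.sin_le_sin_of_le_of_le_pi_div_two (by linarith [Real.pi_pos, hθ₀.1]) hhalf hθ.1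
      nlinarith
    · push_neg at hhalf
      have h1 : Real.sin (π - θ₁) ≤ Real.sin (π - θ) := by
        apply Real.sin_le_sin_of_le_of_le_pi_div_two
        · linarith [hθ₁.2, Real.pi_pos]
        · linarith
        · linarith [hθ.2]
      rw [Real.sin_pi_sub, Real.sin_pi_sub] at h1
      nlinarith [hsθ θ hθ]
  -- inverse functions on the two branches
  have hfc : Continuous (flux γ c₀) := flux_cont hγ hc₀
  obtain ⟨g₁, hg₁c, hg₁inv⟩ :=
    exists_cont_inv (isCompact_Icc (a := cs) (b := uM)) hfc.continuousOn
      (flux_strictAntiOn hγ hc₀).injOn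
  obtain ⟨g₂, hg₂c, hg₂inv⟩ :=
    exists_cont_inv (isCompact_Icc (a := 0) (b := cs)) hfc.continuousOn
      (flux_strictMonoOn hγ hc₀).injOn
  set t : ℝ → ℝ := fun θ => m / Real.sin θ with ht_def
  have hiv₁ : Icc (flux γ c₀ uM) (flux γ c₀ cs) ⊆ flux γ c₀ '' Icc cs uM :=
    intermediate_value_Icc' hcsuM.le hfc.continuousOn
  have hiv₂ : Icc (flux γ c₀ 0) (flux γ c₀ cs) ⊆ flux γ c₀ '' Icc 0 cs :=
    intermediate_value_Icc hcs.le hfc.continuousOn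
  have ht_mem : ∀ θ ∈ Icc θ₀ θ₁, 0 < t θ ∧ t θ < flux γ c₀ cs := by
    intro θ hθ
    have hs := hsθ θ hθ
    constructor
    · exact div_pos hm hs
    · rw [div_lt_iff₀ hs]
      exact key θ hθ
  have hsub₁ : Icc θ₀ θb ⊆ Icc θ₀ θ₁ := Icc_subset_Icc le_rfl hθb.2
  have hsub₂ : Icc θb θ₁ ⊆ Icc θ₀ θ₁ := Icc_subset_Icc hθb.1 le_rfl
  -- supersonic branch facts
  have hum : ∀ θ ∈ Icc θ₀ θb, g₁ (t θ) ∈ Ioo cs uM ∧ flux γ c₀ (g₁ (t θ)) = t θ := by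
    intro θ hθ
    have hmem := ht_mem θ (hsub₁ hθ)
    have htt : t θ ∈ Icc (flux γ c₀ uM) (flux γ c₀ cs) := by
      rw [flux_uMax hγ hc₀]
      exact ⟨hmem.1.le, hmem.2.le⟩
    obtain ⟨x, hx, hfx⟩ := hiv₁ htt
    have hgx : g₁ (t θ) = x := by rw [← hfx]; exact hg₁inv x hx
    have hxne1 : x ≠ cs := by
      intro h
      rw [h] at hfx
      rw [← hfx] at hmem
      exact absurd hmem.2 (lt_irrefl _)
    have hxne2 : x ≠ uM := by
      intro h
      rw [h] at hfx
      rw [flux_uMax hγ hc₀] at hfx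
      exact absurd (hfx ▸ hmem.1) (lt_irrefl _)
    refine ⟨hgx ▸ ⟨lt_of_le_of_ne hx.1 (Ne.symm hxne1), lt_of_le_of_ne hx.2 hxne2⟩, ?_⟩
    rw [hgx, hfx]
  -- subsonic branch facts
  have hup : ∀ θ ∈ Icc θb θ₁, g₂ (t θ) ∈ Ioo 0 cs ∧ flux γ c₀ (g₂ (t θ)) = t θ := by
    intro θ hθ
    have hmem := ht_mem θ (hsub₂ hθ)
    have htt : t θ ∈ Icc (flux γ c₀ 0) (flux γ c₀ cs) := by
      rw [flux_zero hγ hc₀]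
      exact ⟨hmem.1.le, hmem.2.le⟩
    obtain ⟨x, hx, hfx⟩ := hiv₂ htt
    have hgx : g₂ (t θ) = x := by rw [← hfx]; exact hg₂inv x hx
    have hxne1 : x ≠ 0 := by
      intro h
      rw [h] at hfx
      rw [flux_zero hγ hc₀] at hfx
      exact absurd (hfx ▸ hmem.1) (lt_irrefl _)
    have hxne2 : x ≠ cs := by
      intro h
      rw [h] at hfx
      rw [← hfx] at hmem
      exact absurd hmem.2 (lt_irrefl _)
    refine ⟨hgx ▸ ⟨lt_of_le_of_ne hx.1 (Ne.symm hxne1), lt_of_le_of_ne hx.2 hxne2⟩, ?_⟩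
    rw [hgx, hfx]
  have htcont₁ : ContinuousOn t (Icc θ₀ θb) :=
    continuousOn_const.div Real.continuous_sin.continuousOn
      (fun θ hθ => ne_of_gt (hsθ θ (hsub₁ hθ)))
  have htcont₂ : ContinuousOn t (Icc θb θ₁) :=
    continuousOn_const.div Real.continuous_sin.continuousOn
      (fun θ hθ => ne_of_gt (hsθ θ (hsub₂ hθ)))
  have hmaps₁ : MapsTo t (Icc θ₀ θb) (flux γ c₀ '' Icc cs uM) := by
    intro θ hθ
    have hmem := ht_mem θ (hsub₁ hθ)
    apply hiv₁
    rw [flux_uMax hγ hc₀]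
    exact ⟨hmem.1.le, hmem.2.le⟩
  have hmaps₂ : MapsTo t (Icc θb θ₁) (flux γ c₀ '' Icc 0 cs) := by
    intro θ hθ
    have hmem := ht_mem θ (hsub₂ hθ)
    apply hiv₂
    rw [flux_zero hγ hc₀]
    exact ⟨hmem.1.le, hmem.2.le⟩
  have hθbb : θb ∈ Icc θ₀ θb := ⟨hθb.1, le_rfl⟩
  have hθbb' : θb ∈ Icc θb θ₁ := ⟨le_rfl, hθb.2⟩
  have humθb := hum θb hθbb
  have hupθb := hup θb hθbb'
  have hfluxeq : flux γ c₀ (g₁ (t θb)) = flux γ c₀ (g₂ (t θb)) := by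
    rw [humθb.2, hupθb.2]
  refine ⟨g₁ ∘ t, g₂ ∘ t, hg₁c.comp htcont₁ hmaps₁, hg₂c.comp htcont₂ hmaps₂,
    fun θ hθ => (hum θ hθ).1, fun θ hθ => (hup θ hθ).1, ?_, ?_, ?_, ?_, ?_⟩
  · -- um θ₀ = u₀
    have hθ₀b : θ₀ ∈ Icc θ₀ θb := ⟨le_rfl, hθb.1⟩
    have ht0 : t θ₀ = flux γ c₀ u₀ := by
      rw [ht_def]
      simp only
      rw [hm_def, mul_div_cancel_right₀ _ (ne_of_gt hsθ₀)]
    show g₁ (t θ₀) = u₀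
    rw [ht0]
    exact hg₁inv u₀ ⟨hu₀1.le, hu₀2.le⟩
  · intro θ hθ
    have h := (hum θ hθ).2
    show flux γ c₀ (g₁ (t θ)) * Real.sin θ = m
    rw [h, ht_def]
    simp only
    rw [div_mul_cancel₀ _ (ne_of_gt (hsθ θ (hsub₁ hθ)))]
  · intro θ hθ
    have h := (hup θ hθ).2
    show flux γ c₀ (g₂ (t θ)) * Real.sin θ = m
    rw [h, ht_def]
    simp only
    rw [div_mul_cancel₀ _ (ne_of_gt (hsθ θ (hsub₂ hθ)))]
  · -- Rankine–Hugoniot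
    have := hfluxeq
    simp only [flux] at this
    exact this
  · -- entropy
    set a := g₁ (t θb) with ha_def
    set b := g₂ (t θb) with hb_def
    have haI : a ∈ Ioo cs uM := humθb.1
    have hbI : b ∈ Ioo 0 cs := hupθb.1
    have hb_lt_a : b < a := hbI.2.trans haI.1
    have hb0 : 0 < b := hbI.1
    have hAa : 0 < c₀ ^ 2 - (γ - 1) / 2 * a ^ 2 :=
      A_pos hγ hc₀ haI.2 (hcs.trans haI.1).le
    have hAlt : c₀ ^ 2 - (γ - 1) / 2 * a ^ 2 < c₀ ^ 2 - (γ - 1) / 2 * b ^ 2 := by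
      nlinarith [mul_pos (show (0:ℝ) < γ - 1 by linarith)
        (mul_pos (sub_pos.mpr hb_lt_a) (show (0:ℝ) < a + b by linarith))]
    have hγ0 : (0:ℝ) < γ := by linarith
    have hdlt : dens γ c₀ a < dens γ c₀ b := by
      rw [dens, dens]
      exact Real.rpow_lt_rpow (div_pos hAa hγ0).le
        ((div_lt_div_iff_of_pos_right hγ0).mpr hAlt) (one_div_pos.mpr (by linarith))
    have hdens_a : 0 < dens γ c₀ a := dens_pos hγ hc₀ haI.2 (hcs.trans haI.1).le
    rw [pres, pres]
    exact Real.rpow_lt_rpow hdens_a.le hdlt hγ0
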